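/- Let r ≥ 2, let ε ∈ (0,1/2), let λ > 0, and let H be a subhypergraph of K_{n×r} satisfying condition (i) below. Let w be a balanced assignment for H, let i ∈ [r], and let X ⊆ (V_i)⁻ with |X| ≤ εn. Then ψ(X) ≤ r·ψ(V⁺)/λ. -/

import Mathlib

open Finset
open scoped Classical

/-- An edge of the complete `r`-partite `r`-graph `K_{n×r}` on `V = Fin r × Fin n`
(part `V_i = {i} × Fin n`): an `r`-set with exactly one vertex in each part. -/
def PartiteEdge {r n : ℕ} (e : Finset (Fin r × Fin n)) : Prop :=
  ∃ f : Fin r → Fin n, e = Finset.univ.image fun i => (i, f i)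

/-- A balanced assignment for `H ⊆ K_{n×r}`: sums to `0` on each part and is
nonnegative on every edge of `H`. -/
def IsBalancedAssignment {r n : ℕ} (H : Finset (Finset (Fin r × Fin n)))
    (w : Fin r × Fin n → ℝ) : Prop :=
  (∀ i : Fin r, ∑ x : Fin n, w (i, x) = 0) ∧ ∀ e ∈ H, 0 ≤ ∑ v ∈ e, w v

/-- Under condition (i) (with parameters `ε ∈ (0,1/2)`, `λ > 0`), for a
balanced assignment `w`, any `X ⊆ (V_i)⁻` with `|X| ≤ εn` satisfies `ψ(X) ≤ r·ψ(V⁺)/λ`.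
Here `X` is encoded as a finset of `Fin n` (the subset `{(i,x) : x ∈ X}` of part `V_i`). -/
theorem stmt7 (r n : ℕ) (hr : 2 ≤ r) (ε lam : ℝ) (hε0 : 0 < ε) (hε : ε < 1 / 2)
    (hlam : 0 < lam)
    (H : Finset (Finset (Fin r × Fin n))) (hH : ∀ e ∈ H, PartiteEdge e)
    (hi : ∀ i : Fin r, ∀ T : Finset (Fin n), T.Nonempty → (T.card : ℝ) ≤ ε * n →
      ∀ U : Fin r → Finset (Fin n), (∀ j : Fin r, j ≠ i → ((U j).card : ℝ) ≤ lam * T.card) →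
      ∃ e ∈ H, (∃ t ∈ T, (i, t) ∈ e) ∧ ∀ j : Fin r, j ≠ i → ∀ u ∈ U j, (j, u) ∉ e)
    (w : Fin r × Fin n → ℝ) (hw : IsBalancedAssignment H w)
    (i : Fin r) (X : Finset (Fin n)) (hXneg : ∀ x ∈ X, w (i, x) < 0)
    (hXcard : (X.card : ℝ) ≤ ε * n) :
    ∑ x ∈ X, |w (i, x)| ≤
      r * (∑ v ∈ Finset.univ.filter (fun v : Fin r × Fin n => 0 ≤ w v), |w v|) / lam := by
  classical
  have hr1 : (2:ℝ) ≤ (r:ℝ) := by exact_mod_cast hr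
  have hr0 : (0:ℝ) < (r:ℝ) - 1 := by linarith
  set ψp : ℝ := ∑ v ∈ Finset.univ.filter (fun v : Fin r × Fin n => 0 ≤ w v), |w v| with hψp
  have hψp0 : 0 ≤ ψp := Finset.sum_nonneg fun v _ => abs_nonneg _
  set a : Fin n → ℝ := fun x => -w (i, x) with ha
  -- Threshold lemma: if all of `T ⊆ X` has `a ≥ t > 0`, then there are more than
  -- `lam * |T|` vertices of weight at least `t/(r-1)`.
  have thresh : ∀ t : ℝ, 0 < t → ∀ T : Finset (Fin n), T ⊆ X → T.Nonempty →
      (∀ x ∈ T, t ≤ a x) →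
      lam * T.card < (((Finset.univ : Finset (Fin r × Fin n)).filter
        (fun v => t / ((r:ℝ)-1) ≤ w v)).card : ℝ) := by
    intro t ht T hTX hTne hTa
    by_contra hcon
    push_neg at hcon
    set U : Fin r → Finset (Fin n) :=
      fun j => Finset.univ.filter (fun x => t / ((r:ℝ)-1) ≤ w (j, x)) with hU
    have hUcard : ∀ j : Fin r, j ≠ i → ((U j).card : ℝ) ≤ lam * T.card := by
      intro j _
      refine le_trans ?_ hcon
      have hle : (U j).card ≤ ((Finset.univ : Finset (Fin r × Fin n)).filter
          (fun v => t / ((r:ℝ)-1) ≤ w v)).card := by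
        apply Finset.card_le_card_of_injOn (fun x => (j, x))
        · intro x hx
          simp only [hU, Finset.mem_coe, Finset.mem_filter, Finset.mem_univ, true_and] at hx ⊢
          exact hx
        · intro x _ y _ h
          exact ((Prod.mk.injEq _ _ _ _).mp h).2
      exact_mod_cast hle
    obtain ⟨e, heH, ⟨t₀, ht₀T, ht₀e⟩, havoid⟩ :=
      hi i T hTne (le_trans (by exact_mod_cast Finset.card_le_card hTX) hXcard) U hUcard
    obtain ⟨f, hef⟩ := hH e heH
    have hsum := hw.2 e heH
    have hinj : ∀ x ∈ (Finset.univ : Finset (Fin r)), ∀ y ∈ (Finset.univ : Finset (Fin r)),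
        (fun j : Fin r => ((j, f j) : Fin r × Fin n)) x = (fun j => (j, f j)) y → x = y := by
      intro x _ y _ h
      exact congrArg Prod.fst h
    rw [hef, Finset.sum_image hinj] at hsum
    have hfi : f i = t₀ := by
      rw [hef, Finset.mem_image] at ht₀e
      obtain ⟨j, _, hj⟩ := ht₀e
      obtain ⟨h1, h2⟩ := Prod.mk.injEq .. |>.mp hj
      subst h1; exact h2
    have h1 : w (i, f i) ≤ -t := by
      have h := hTa t₀ ht₀T
      rw [hfi]
      simp only [ha] at h
      linarith
    have h2 : ∀ j ∈ Finset.univ.erase i, w (j, f j) < t / ((r:ℝ)-1) := by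
      intro j hj
      have hji : j ≠ i := (Finset.mem_erase.mp hj).1
      have hnot : f j ∉ U j := fun hmem =>
        havoid j hji (f j) hmem (by rw [hef]; exact Finset.mem_image_of_mem _ (Finset.mem_univ j))
      simp only [hU, Finset.mem_filter, Finset.mem_univ, true_and, not_le] at hnot
      exact hnot
    have hcard_erase : ((Finset.univ : Finset (Fin r)).erase i).card = r - 1 := by
      rw [Finset.card_erase_of_mem (Finset.mem_univ i), Finset.card_univ, Fintype.card_fin]
    have hne : ((Finset.univ : Finset (Fin r)).erase i).Nonempty := by
      rw [← Finset.card_pos, hcard_erase]; omega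
    have h3 : ∑ j ∈ Finset.univ.erase i, w (j, f j) <
        ∑ _j ∈ Finset.univ.erase i, t / ((r:ℝ)-1) :=
      Finset.sum_lt_sum_of_nonempty hne h2
    rw [Finset.sum_const, hcard_erase, nsmul_eq_mul] at h3
    have hcast : ((r - 1 : ℕ) : ℝ) = (r:ℝ) - 1 := by
      have h1r : 1 ≤ r := by omega
      push_cast [h1r]
      ring
    rw [hcast] at h3
    have h4 : ((r:ℝ)-1) * (t / ((r:ℝ)-1)) = t := by field_simp
    have h5 : ∑ j : Fin r, w (j, f j)
        = w (i, f i) + ∑ j ∈ Finset.univ.erase i, w (j, f j) :=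
      (Finset.add_sum_erase _ _ (Finset.mem_univ i)).symm
    rw [h5] at hsum
    linarith
  -- Enumerate X in decreasing order of `a`.
  set k := X.card with hk
  set eX := X.orderIsoOfFin hk.symm with heX
  set σ := Tuple.sort (fun m : Fin k => -(a (eX m))) with hσ
  set φ : Fin k → Fin n := fun m => ((eX (σ m) : {x // x ∈ X}) : Fin n) with hφ
  have hφX : ∀ m, φ m ∈ X := fun m => (eX (σ m)).2
  have hφinj : Function.Injective φ := by
    intro m m' h
    exact σ.injective (eX.injective (Subtype.ext h))
  have hanti : ∀ m m' : Fin k, m ≤ m' → a (φ m') ≤ a (φ m) := by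
    intro m m' hmm
    have h := Tuple.monotone_sort (fun m : Fin k => -(a (eX m))) hmm
    simp only [Function.comp] at h
    simp only [hφ]
    linarith
  set A : ℕ → ℝ := fun m => if h : m < k then a (φ ⟨m, h⟩) else 0 with hA
  have hApos : ∀ m, m < k → 0 < A m := by
    intro m hm
    simp only [hA, dif_pos hm]
    have := hXneg _ (hφX ⟨m, hm⟩)
    simp only [ha]
    linarith
  have hAnn : ∀ m, 0 ≤ A m := by
    intro m
    by_cases hm : m < k
    · exact (hApos m hm).le
    · simp [hA, hm]
  have hAmono : ∀ m m' : ℕ, m ≤ m' → A m' ≤ A m := by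
    intro m m' hmm
    by_cases hm' : m' < k
    · have hm : m < k := lt_of_le_of_lt hmm hm'
      simp only [hA, dif_pos hm, dif_pos hm']
      exact hanti ⟨m, hm⟩ ⟨m', hm'⟩ hmm
    · have : A m' = 0 := by simp [hA, hm']
      rw [this]; exact hAnn m
  have hAk : A k = 0 := by simp [hA]
  -- Key inequality per index.
  have hkey : ∀ m : ℕ, m < k →
      lam * ((m:ℝ)+1) ≤ (((Finset.univ : Finset (Fin r × Fin n)).filter
        (fun v => A m / ((r:ℝ)-1) ≤ w v)).card : ℝ) := by
    intro m hm
    set T : Finset (Fin n) := X.filter (fun x => A m ≤ a x) with hT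
    have hTX : T ⊆ X := Finset.filter_subset _ _
    have hmemT : φ ⟨m, hm⟩ ∈ T := by
      rw [hT, Finset.mem_filter]
      exact ⟨hφX _, by simp [hA, dif_pos hm]⟩
    have hTne : T.Nonempty := ⟨_, hmemT⟩
    have hTa : ∀ x ∈ T, A m ≤ a x := fun x hx => (Finset.mem_filter.mp hx).2
    have hcardT : (m:ℝ) + 1 ≤ (T.card : ℝ) := by
      have hIic : (Finset.Iic (⟨m, hm⟩ : Fin k)).card = m + 1 := by
        rw [Fin.card_Iic]
      have hle : (Finset.Iic (⟨m, hm⟩ : Fin k)).card ≤ T.card := by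
        apply Finset.card_le_card_of_injOn φ
        · intro j hj
          rw [Finset.mem_coe, Finset.mem_Iic] at hj
          rw [Finset.mem_coe, hT, Finset.mem_filter]
          refine ⟨hφX j, ?_⟩
          have := hanti j ⟨m, hm⟩ hj
          simp only [hA, dif_pos hm]
          linarith
        · exact Function.Injective.injOn hφinj
      rw [hIic] at hle
      exact_mod_cast hle
    have := thresh (A m) (hApos m hm) T hTX hTne hTa
    have hlam' : lam * ((m:ℝ)+1) ≤ lam * T.card :=
      mul_le_mul_of_nonneg_left hcardT hlam.le
    linarith
  -- Rewrite ψ(X) as a sum over range k.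
  have hS1 : ∑ x ∈ X, |w (i, x)| = ∑ m ∈ Finset.range k, A m := by
    have e1 : ∑ x ∈ X, |w (i, x)| = ∑ x ∈ X, a x :=
      Finset.sum_congr rfl fun x hx => abs_of_neg (hXneg x hx)
    have e2 : ∑ m ∈ Finset.range k, A m = ∑ m : Fin k, a (φ m) := by
      rw [Finset.sum_range]
      apply Finset.sum_congr rfl
      intro m _
      simp [hA, m.isLt]
    have e3 : ∑ m : Fin k, a (φ m) = ∑ m : Fin k, a ((eX m : {x // x ∈ X}) : Fin n) :=
      Equiv.sum_comp σ (fun m => a ((eX m : {x // x ∈ X}) : Fin n))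
    have e4 : ∑ m : Fin k, a ((eX m : {x // x ∈ X}) : Fin n) = ∑ x ∈ X, a x := by
      rw [← Finset.sum_coe_sort X (fun x => a x)]
      exact Equiv.sum_comp eX.toEquiv (fun x : {x // x ∈ X} => a (x : Fin n))
    rw [e1, e2, e3, e4]
  -- Abel summation.
  have habel : ∀ K : ℕ, ∑ m ∈ Finset.range K, A m =
      (∑ m ∈ Finset.range K, ((m:ℝ)+1) * (A m - A (m+1))) + K * A K := by
    intro K
    induction K with
    | zero => simp
    | succ K ih =>
        rw [Finset.sum_range_succ, Finset.sum_range_succ (f := fun m => ((m:ℝ)+1) * (A m - A (m+1))), ih]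
        push_cast
        ring
  -- Inner layer-cake bound.
  have inner : ∀ c : ℝ,
      ∑ m ∈ Finset.range k, (if A m ≤ c then (1:ℝ) else 0) * (A m - A (m+1)) ≤ max c 0 := by
    intro c
    have hite : ∀ m ∈ Finset.range k,
        (if A m ≤ c then (1:ℝ) else 0) * (A m - A (m+1))
          = if A m ≤ c then (A m - A (m+1)) else 0 := by
      intro m _
      split_ifs <;> ring
    rw [Finset.sum_congr rfl hite, ← Finset.sum_filter]
    set F := (Finset.range k).filter (fun m => A m ≤ c) with hF
    rcases F.eq_empty_or_nonempty with hFe | hFne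
    · rw [hFe, Finset.sum_empty]
      exact le_max_right c 0
    · set m₀ := F.min' hFne with hm₀
      have hm₀F : m₀ ∈ F := Finset.min'_mem _ _
      have hm₀k : m₀ < k := Finset.mem_range.mp (Finset.mem_filter.mp hm₀F).1
      have hm₀c : A m₀ ≤ c := (Finset.mem_filter.mp hm₀F).2
      have hsub : F ⊆ Finset.Ico m₀ k := by
        intro m hm
        rw [Finset.mem_Ico]
        exact ⟨Finset.min'_le _ _ hm, Finset.mem_range.mp (Finset.mem_filter.mp hm).1⟩
      have hΔnn : ∀ m ∈ Finset.Ico m₀ k, m ∉ F → 0 ≤ A m - A (m+1) := by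
        intro m _ _
        have := hAmono m (m+1) (Nat.le_succ m)
        linarith
      calc ∑ m ∈ F, (A m - A (m+1))
          ≤ ∑ m ∈ Finset.Ico m₀ k, (A m - A (m+1)) :=
            Finset.sum_le_sum_of_subset_of_nonneg hsub hΔnn
        _ = A m₀ - A k := by
            rw [Finset.sum_Ico_eq_sub _ hm₀k.le, Finset.sum_range_sub' A,
              Finset.sum_range_sub' A]
            ring
        _ ≤ max c 0 := by
            rw [hAk]
            have := le_max_left c 0
            linarith
  -- Main chain.
  have main : lam * ∑ m ∈ Finset.range k, A m ≤ ((r:ℝ)-1) * ψp := by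
    have step1 : lam * ∑ m ∈ Finset.range k, A m
        = ∑ m ∈ Finset.range k, lam * (((m:ℝ)+1) * (A m - A (m+1))) := by
      rw [habel k, hAk]
      simp only [mul_zero, add_zero]
      rw [Finset.mul_sum]
    have step2 : ∑ m ∈ Finset.range k, lam * (((m:ℝ)+1) * (A m - A (m+1)))
        ≤ ∑ m ∈ Finset.range k, (((Finset.univ : Finset (Fin r × Fin n)).filter
            (fun v => A m / ((r:ℝ)-1) ≤ w v)).card : ℝ) * (A m - A (m+1)) := by
      apply Finset.sum_le_sum
      intro m hm
      have hm' := Finset.mem_range.mp hm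
      have hΔ : 0 ≤ A m - A (m+1) := by
        have := hAmono m (m+1) (Nat.le_succ m)
        linarith
      have hk' := hkey m hm'
      calc lam * (((m:ℝ)+1) * (A m - A (m+1)))
          = (lam * ((m:ℝ)+1)) * (A m - A (m+1)) := by ring
        _ ≤ _ := mul_le_mul_of_nonneg_right hk' hΔ
    have step3 : ∑ m ∈ Finset.range k, (((Finset.univ : Finset (Fin r × Fin n)).filter
          (fun v => A m / ((r:ℝ)-1) ≤ w v)).card : ℝ) * (A m - A (m+1))
        = ∑ v : Fin r × Fin n, ∑ m ∈ Finset.range k,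
            (if A m ≤ w v * ((r:ℝ)-1) then (1:ℝ) else 0) * (A m - A (m+1)) := by
      rw [Finset.sum_comm]
      apply Finset.sum_congr rfl
      intro m _
      rw [← Finset.sum_mul]
      congr 1
      rw [Finset.sum_boole]
      congr 1
      apply Finset.card_bij (fun v _ => v)  -- same filter, different predicate form
      · intro v hv
        simp only [Finset.mem_filter, Finset.mem_univ, true_and] at hv ⊢
        rwa [div_le_iff₀ hr0] at hv
      · intro v v' _ _ h; exact h
      · intro v hv
        refine ⟨v, ?_, rfl⟩
        simp only [Finset.mem_filter, Finset.mem_univ, true_and] at hv ⊢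
        rwa [div_le_iff₀ hr0]
    have step4 : ∑ v : Fin r × Fin n, ∑ m ∈ Finset.range k,
          (if A m ≤ w v * ((r:ℝ)-1) then (1:ℝ) else 0) * (A m - A (m+1))
        ≤ ∑ v : Fin r × Fin n, max (w v * ((r:ℝ)-1)) 0 :=
      Finset.sum_le_sum fun v _ => inner (w v * ((r:ℝ)-1))
    have step5 : ∑ v : Fin r × Fin n, max (w v * ((r:ℝ)-1)) 0 = ((r:ℝ)-1) * ψp := by
      rw [hψp, Finset.sum_filter, Finset.mul_sum]
      apply Finset.sum_congr rfl
      intro v _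
      by_cases hv : 0 ≤ w v
      · rw [if_pos hv, abs_of_nonneg hv, max_eq_left (by nlinarith)]
        ring
      · push_neg at hv
        rw [if_neg (not_le.mpr hv), max_eq_right (by nlinarith)]
        ring
    calc lam * ∑ m ∈ Finset.range k, A m
        = ∑ m ∈ Finset.range k, lam * (((m:ℝ)+1) * (A m - A (m+1))) := step1
      _ ≤ _ := step2
      _ = _ := step3
      _ ≤ _ := step4
      _ = ((r:ℝ)-1) * ψp := step5
  rw [hS1, le_div_iff₀ hlam]
  nlinarith [main, hψp0]
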